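/- Let α, β, c, κ₁, κ₃, Dα, Dβ be real numbers with α ≠ 0 and β ≠ 0, satisfying: β²κ₃/α = βκ₁ + c/4; Dα = β(α + κ₃); Dβ = β² + βκ₁ + c/2; and (2βα·Dβ − β²·Dα)/α² = (β²/α)(κ₁ + β). Then c = 0. (This is the contradiction derived in the proof of Lemma 4.2 on Ω₁₁ from relations (4.8)–(4.11), where Dα and Dβ denote the derivatives of α and β along φU.) -/

import Mathlib

/-- The contradiction on Ω₁₁ in the proof of Lemma 4.2: relations (4.8)–(4.11), with `Dα`, `Dβ`
denoting the derivatives of `α`, `β` along `φU`, force `c = 0`. -/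
theorem lemma_4_2_omega11_contradiction
    (α β c κ₁ κ₃ Dα Dβ : ℝ) (hα : α ≠ 0) (hβ : β ≠ 0)
    (h48 : β ^ 2 * κ₃ / α = β * κ₁ + c / 4)
    (h49 : Dα = β * (α + κ₃))
    (h410 : Dβ = β ^ 2 + β * κ₁ + c / 2)
    (h411 : (2 * β * α * Dβ - β ^ 2 * Dα) / α ^ 2 = (β ^ 2 / α) * (κ₁ + β)) :
    c = 0 := by
  field_simp at h48 h411
  subst h49 h410
  have hkey : 3 / 4 * c * β * α ^ 2 = 0 := by linear_combination (β * α) * h411 + (β * α / 4) * h48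
  rcases mul_eq_zero.1 hkey with h | h
  · rcases mul_eq_zero.1 h with h | h
    · linarith
    · exact absurd h hβ
  · exact absurd h (pow_ne_zero 2 hα)
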